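/- Let G be a graph that has a c-deletion set of size at most k. Then every vertex of G that has degree at least k + c belongs to every c-deletion set of G of size at most k; in particular, the set D_G^{k+c} of vertices of degree at least k+c has size at most k. -/

import Mathlib

/-- Reachability within the vertex subset `S` using the adjacency relation `R`. -/
def RelReachIn {W : Type*} (R : W → W → Prop) (S : Set W) : W → W → Prop :=
  Relation.ReflTransGen (fun x y => x ∈ S ∧ y ∈ S ∧ R x y)

/-- The connected component, inside the induced subgraph on `S`, containing `a`. -/
def RelCompIn {W : Type*} (R : W → W → Prop) (S : Set W) (a : W) : Set W :=
  {b | b ∈ S ∧ RelReachIn R S a b}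

theorem high_degree_vertices_in_every_deletion_set {V : Type*} [Fintype V]
    (G : SimpleGraph V) [DecidableRel G.Adj] (c k : ℕ) (hc : 1 ≤ c) (hk : 1 ≤ k)
    (hdel : ∃ D' : Set V, D'.ncard ≤ k ∧ ∀ a ∉ D', (RelCompIn G.Adj D'ᶜ a).ncard ≤ c) :
    (∀ S : Set V, (∀ a ∉ S, (RelCompIn G.Adj Sᶜ a).ncard ≤ c) → S.ncard ≤ k →
      ∀ v : V, k + c ≤ G.degree v → v ∈ S) ∧
    {v : V | k + c ≤ G.degree v}.ncard ≤ k := by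
  have main : ∀ S : Set V, (∀ a ∉ S, (RelCompIn G.Adj Sᶜ a).ncard ≤ c) → S.ncard ≤ k →
      ∀ v : V, k + c ≤ G.degree v → v ∈ S := by
    intro S hS hSk v hv
    by_contra hvS
    set C := RelCompIn G.Adj Sᶜ v with hC
    have hvC : v ∈ C := ⟨hvS, Relation.ReflTransGen.refl⟩
    have hCc : C.ncard ≤ c := hS v hvS
    -- every neighbor of v is in S or in C \ {v}
    have hsub : G.neighborSet v ⊆ S ∪ (C \ {v}) := by
      intro u hu
      by_cases huS : u ∈ S
      · exact Or.inl huS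
      · refine Or.inr ⟨⟨huS, Relation.ReflTransGen.single ⟨hvS, huS, hu⟩⟩, ?_⟩
        simp only [Set.mem_singleton_iff]
        rintro rfl
        exact G.loopless.irrefl _ hu
    have hdeg : G.degree v = (G.neighborSet v).ncard := by
      rw [Set.ncard_eq_toFinset_card']
      simp [SimpleGraph.degree, SimpleGraph.neighborFinset]
    have h1 : (G.neighborSet v).ncard ≤ (S ∪ (C \ {v})).ncard :=
      Set.ncard_le_ncard hsub (Set.toFinite _)
    have h2 : (S ∪ (C \ {v})).ncard ≤ S.ncard + (C \ {v}).ncard :=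
      Set.ncard_union_le _ _
    have h3 : (C \ {v}).ncard = C.ncard - 1 :=
      Set.ncard_diff_singleton_of_mem hvC
    omega
  refine ⟨main, ?_⟩
  obtain ⟨D', hD'k, hD'⟩ := hdel
  have hsub : {v : V | k + c ≤ G.degree v} ⊆ D' := fun v hv =>
    main D' hD' hD'k v hv
  exact le_trans (Set.ncard_le_ncard hsub (Set.toFinite _)) hD'k
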